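/- For φ ∈ [0,1], ∫_0^∞ (log(z) - φ + γ)² [φ(z-1) + 1] e^{-z} dz = π²/6 - φ². -/

import Mathlib

open Complex Set MeasureTheory Filter Asymptotics Real
open scoped Topology
noncomputable section


abbrev fE : ℝ → ℂ := fun t => (Real.exp (-t) : ℂ)
abbrev fE1 : ℝ → ℂ := fun t => Real.log t • fE t
abbrev fE2 : ℝ → ℂ := fun t => Real.log t • fE1 t
abbrev fE3 : ℝ → ℂ := fun t => Real.log t • fE2 t

lemma fE_cont : Continuous fE := Complex.continuous_ofReal.comp (Real.continuous_exp.comp continuous_neg)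

lemma fE_top : fE =O[atTop] fun x : ℝ => x ^ (-(3:ℝ)) := by
  rw [← isBigO_norm_left]
  simp_rw [Complex.norm_real, isBigO_norm_left]
  simpa only [neg_one_mul] using (isLittleO_exp_neg_mul_rpow_atTop zero_lt_one _).isBigO

lemma fE_bot : fE =O[𝓝[>] (0:ℝ)] fun x : ℝ => x ^ (-(0:ℝ)) := by
  simp_rw [neg_zero, Real.rpow_zero]
  refine isBigO_const_of_tendsto (?_ : Tendsto _ _ (𝓝 (1 : ℂ))) one_ne_zero
  rw [(by simp : (1 : ℂ) = Real.exp (-0))]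
  exact fE_cont.continuousWithinAt

lemma fE1_top : fE1 =O[atTop] fun x : ℝ => x ^ (-(3:ℝ)) := by
  have := isBigO_rpow_top_log_smul (f := fE) (a := 4) (b := 3) (by norm_num) ?_
  · exact this
  · rw [← isBigO_norm_left]
    simp_rw [Complex.norm_real, isBigO_norm_left]
    simpa only [neg_one_mul] using (isLittleO_exp_neg_mul_rpow_atTop zero_lt_one _).isBigO

lemma fE1_bot : fE1 =O[𝓝[>] (0:ℝ)] fun x : ℝ => x ^ (-(1/2:ℝ)) :=
  isBigO_rpow_zero_log_smul (by norm_num) fE_bot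

lemma fE2_top : fE2 =O[atTop] fun x : ℝ => x ^ (-(3:ℝ)) := by
  have h4 : fE1 =O[atTop] fun x : ℝ => x ^ (-(4:ℝ)) := by
    have := isBigO_rpow_top_log_smul (f := fE) (a := 5) (b := 4) (by norm_num) ?_
    · exact this
    · rw [← isBigO_norm_left]
      simp_rw [Complex.norm_real, isBigO_norm_left]
      simpa only [neg_one_mul] using (isLittleO_exp_neg_mul_rpow_atTop zero_lt_one _).isBigO
  exact isBigO_rpow_top_log_smul (by norm_num) h4

lemma fE2_bot : fE2 =O[𝓝[>] (0:ℝ)] fun x : ℝ => x ^ (-(3/4:ℝ)) :=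
  isBigO_rpow_zero_log_smul (by norm_num) fE1_bot

lemma fE_loc : LocallyIntegrableOn fE (Ioi 0) :=
  fE_cont.continuousOn.locallyIntegrableOn measurableSet_Ioi

lemma fE1_loc : LocallyIntegrableOn fE1 (Ioi 0) := by
  refine ContinuousOn.locallyIntegrableOn ?_ measurableSet_Ioi
  exact ((Complex.continuous_ofReal.comp_continuousOn
    (Real.continuousOn_log.mono (fun x hx => ne_of_gt hx))).smul fE_cont.continuousOn)

lemma fE2_loc : LocallyIntegrableOn fE2 (Ioi 0) := by
  refine ContinuousOn.locallyIntegrableOn ?_ measurableSet_Ioi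
  exact ((Complex.continuous_ofReal.comp_continuousOn
    (Real.continuousOn_log.mono (fun x hx => ne_of_gt hx))).smul
    ((Complex.continuous_ofReal.comp_continuousOn
    (Real.continuousOn_log.mono (fun x hx => ne_of_gt hx))).smul fE_cont.continuousOn))

lemma mellin1 {s : ℂ} (h1 : 0 < s.re) (h2 : s.re < 3) :
    MellinConvergent fE1 s ∧ HasDerivAt (mellin fE) (mellin fE1 s) s :=
  mellin_hasDerivAt_of_isBigO_rpow fE_loc fE_top h2 fE_bot (by simpa using h1)

lemma mellin2 {s : ℂ} (h1 : 1/2 < s.re) (h2 : s.re < 3) :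
    MellinConvergent fE2 s ∧ HasDerivAt (mellin fE1) (mellin fE2 s) s :=
  mellin_hasDerivAt_of_isBigO_rpow fE1_loc fE1_top h2 fE1_bot h1

lemma mellin3 {s : ℂ} (h1 : 3/4 < s.re) (h2 : s.re < 3) :
    MellinConvergent fE3 s ∧ HasDerivAt (mellin fE2) (mellin fE3 s) s :=
  mellin_hasDerivAt_of_isBigO_rpow fE2_loc fE2_top h2 fE2_bot h1

lemma isOpen_strip (a b : ℝ) : IsOpen {z : ℂ | a < z.re ∧ z.re < b} :=
  (isOpen_lt continuous_const Complex.continuous_re).inter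
    (isOpen_lt Complex.continuous_re continuous_const)

lemma mellin_fE_eq {s : ℂ} (hs : 0 < s.re) : mellin fE s = Complex.Gamma s := by
  rw [← Complex.GammaIntegral_eq_mellin, ← Complex.Gamma_eq_integral hs]

lemma hd1 {z : ℂ} (h1 : 0 < z.re) (h2 : z.re < 3) :
    HasDerivAt Complex.Gamma (mellin fE1 z) z := by
  refine (mellin1 h1 h2).2.congr_of_eventuallyEq ?_
  filter_upwards [(isOpen_strip 0 3).mem_nhds ⟨h1, h2⟩] with x hx
  exact (mellin_fE_eq hx.1).symm

lemma deriv_Gamma_eq {z : ℂ} (h1 : 0 < z.re) (h2 : z.re < 3) :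
    deriv Complex.Gamma z = mellin fE1 z := (hd1 h1 h2).deriv

lemma hd2 {z : ℂ} (h1 : 1/2 < z.re) (h2 : z.re < 3) :
    HasDerivAt (deriv Complex.Gamma) (mellin fE2 z) z := by
  refine (mellin2 h1 h2).2.congr_of_eventuallyEq ?_
  filter_upwards [(isOpen_strip 0 3).mem_nhds ⟨by linarith, h2⟩] with x hx
  exact deriv_Gamma_eq hx.1 hx.2

lemma deriv2_Gamma_eq {z : ℂ} (h1 : 1/2 < z.re) (h2 : z.re < 3) :
    deriv (deriv Complex.Gamma) z = mellin fE2 z := (hd2 h1 h2).deriv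

lemma hd3 {z : ℂ} (h1 : 3/4 < z.re) (h2 : z.re < 3) :
    HasDerivAt (deriv (deriv Complex.Gamma)) (mellin fE3 z) z := by
  refine (mellin3 h1 h2).2.congr_of_eventuallyEq ?_
  filter_upwards [(isOpen_strip (1/2) 3).mem_nhds ⟨by linarith, h2⟩] with x hx
  exact deriv2_Gamma_eq hx.1 hx.2

lemma hd1' {z : ℂ} (h1 : 0 < z.re) (h2 : z.re < 3) :
    HasDerivAt Complex.Gamma (deriv Complex.Gamma z) z := by
  rw [deriv_Gamma_eq h1 h2]; exact hd1 h1 h2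

lemma hd2' {z : ℂ} (h1 : 1/2 < z.re) (h2 : z.re < 3) :
    HasDerivAt (deriv Complex.Gamma) (deriv (deriv Complex.Gamma) z) z := by
  rw [deriv2_Gamma_eq h1 h2]; exact hd2 h1 h2

lemma hd3' {z : ℂ} (h1 : 3/4 < z.re) (h2 : z.re < 3) :
    HasDerivAt (deriv (deriv Complex.Gamma)) (deriv (deriv (deriv Complex.Gamma)) z) z :=
  (hd3 h1 h2).deriv ▸ hd3 h1 h2


local notation "Γc" => Complex.Gamma
local notation "Γ₁" => deriv Complex.Gamma
local notation "Γ₂" => deriv (deriv Complex.Gamma)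
local notation "Γ₃" => deriv (deriv (deriv Complex.Gamma))

abbrev B : Set ℂ := Metric.ball (0:ℂ) (1/4)

lemma memB {s : ℂ} (hs : s ∈ B) :
    3/4 < (1+s).re ∧ (1+s).re < 3 ∧ 3/4 < (1-s).re ∧ (1-s).re < 3 := by
  rw [Metric.mem_ball, dist_zero_right] at hs
  have h := Complex.abs_re_le_norm s
  have := abs_lt.mp (lt_of_le_of_lt h hs)
  simp only [Complex.add_re, Complex.sub_re, Complex.one_re]
  constructor <;> [skip; constructor] <;> [linarith; linarith; constructor <;> linarith]

abbrev hh : ℂ → ℂ := fun s => Γc (1+s) * Γc (1-s)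
abbrev hh1 : ℂ → ℂ := fun s => Γ₁ (1+s) * Γc (1-s) - Γc (1+s) * Γ₁ (1-s)
abbrev hh2 : ℂ → ℂ := fun s => Γ₂ (1+s) * Γc (1-s) - 2 * (Γ₁ (1+s) * Γ₁ (1-s)) + Γc (1+s) * Γ₂ (1-s)
abbrev hh3 : ℂ → ℂ := fun s =>
  Γ₃ (1+s) * Γc (1-s) - 3 * (Γ₂ (1+s) * Γ₁ (1-s)) + 3 * (Γ₁ (1+s) * Γ₂ (1-s)) - Γc (1+s) * Γ₃ (1-s)

lemma hasDeriv_plus {s : ℂ} {g : ℂ → ℂ} (hg : HasDerivAt g (deriv g (1+s)) (1+s)) :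
    HasDerivAt (fun s => g (1+s)) (deriv g (1+s)) s := by
  simpa [Function.comp_def] using hg.comp s ((hasDerivAt_id s).const_add 1)

lemma hasDeriv_minus {s : ℂ} {g : ℂ → ℂ} (hg : HasDerivAt g (deriv g (1-s)) (1-s)) :
    HasDerivAt (fun s => g (1-s)) (-(deriv g (1-s))) s := by
  simpa [Function.comp_def] using hg.comp s ((hasDerivAt_id s).const_sub 1)

lemma hh_deriv {s : ℂ} (hs : s ∈ B) : HasDerivAt hh (hh1 s) s := by
  obtain ⟨a1, a2, a3, a4⟩ := memB hs
  have H1 := hasDeriv_plus (hd1' (by linarith) a2)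
  have H2 := hasDeriv_minus (hd1' (by linarith) a4)
  have := H1.mul H2
  exact this.congr_deriv (by ring)

lemma hh1_deriv {s : ℂ} (hs : s ∈ B) : HasDerivAt hh1 (hh2 s) s := by
  obtain ⟨a1, a2, a3, a4⟩ := memB hs
  have H1 := hasDeriv_plus (hd1' (by linarith) a2)
  have H2 := hasDeriv_minus (hd1' (by linarith) a4)
  have H1' := hasDeriv_plus (hd2' (by linarith) a2)
  have H2' := hasDeriv_minus (hd2' (by linarith) a4)
  have := (H1'.mul H2).sub (H1.mul H2')
  exact this.congr_deriv (by ring)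

lemma hh2_deriv {s : ℂ} (hs : s ∈ B) : HasDerivAt hh2 (hh3 s) s := by
  obtain ⟨a1, a2, a3, a4⟩ := memB hs
  have H1 := hasDeriv_plus (hd1' (by linarith) a2)
  have H2 := hasDeriv_minus (hd1' (by linarith) a4)
  have H1' := hasDeriv_plus (hd2' (by linarith) a2)
  have H2' := hasDeriv_minus (hd2' (by linarith) a4)
  have H1'' := hasDeriv_plus (hd3' a1 a2)
  have H2'' := hasDeriv_minus (hd3' a3 a4)
  have := ((H1''.mul H2).sub ((H1'.mul H2').const_mul 2)).add (H1.mul H2'')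
  exact this.congr_deriv (by ring)

abbrev sn : ℂ → ℂ := fun s => Complex.sin ((π:ℂ) * s)

lemma sn_deriv (s : ℂ) : HasDerivAt sn ((π:ℂ) * Complex.cos ((π:ℂ)*s)) s := by
  exact ((Complex.hasDerivAt_sin ((π:ℂ)*s)).comp s ((hasDerivAt_id s).const_mul (π:ℂ))).congr_deriv (by ring)

lemma cs_deriv (s : ℂ) : HasDerivAt (fun s => (π:ℂ) * Complex.cos ((π:ℂ)*s))
    (-((π:ℂ)^2 * Complex.sin ((π:ℂ)*s))) s := by
  have := ((Complex.hasDerivAt_cos ((π:ℂ)*s)).comp s ((hasDerivAt_id s).const_mul (π:ℂ))).const_mul (π:ℂ)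
  exact this.congr_deriv (by simp; ring)

abbrev FF : ℂ → ℂ := fun s => hh s * sn s - (π:ℂ) * s

lemma FF_zero {s : ℂ} (hs : s ∈ B) : FF s = 0 := by
  rcases eq_or_ne s 0 with rfl | hs0
  · simp [FF, sn]
  · have hsin : Complex.sin ((π:ℂ)*s) ≠ 0 := by
      rw [Complex.sin_ne_zero_iff]
      intro k hk
      rw [mul_comm] at hk
      have hπ : (π:ℂ) ≠ 0 := Complex.ofReal_ne_zero.mpr Real.pi_ne_zero
      have hsk : s = (k:ℂ) := by
        field_simp at hk
        exact hk
      rw [Metric.mem_ball, dist_zero_right, hsk] at hs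
      rcases eq_or_ne k 0 with rfl | hk0
      · exact hs0 (by simpa using hsk)
      · have : (1:ℝ) ≤ ‖(k:ℂ)‖ := by
          rw [Complex.norm_intCast]
          exact_mod_cast Int.one_le_abs hk0
        linarith
    have hGadd : Γc (1+s) = s * Γc s := by
      rw [add_comm]; exact Complex.Gamma_add_one s hs0
    have hrefl := Complex.Gamma_mul_Gamma_one_sub s
    have hkey : Γc s * Γc (1 - s) * Complex.sin ((π:ℂ) * s) = (π:ℂ) := by
      rw [hrefl]; field_simp
    simp only [FF, hh, sn]
    rw [hGadd]
    linear_combination s * hkey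

lemma FF1_zero {s : ℂ} (hs : s ∈ B) :
    hh1 s * sn s + hh s * ((π:ℂ) * Complex.cos ((π:ℂ)*s)) - (π:ℂ) = 0 := by
  have h0 : HasDerivAt FF 0 s := by
    refine (hasDerivAt_const s 0).congr_of_eventuallyEq ?_
    filter_upwards [Metric.isOpen_ball.mem_nhds hs] with x hx
    exact FF_zero hx
  have h1 : HasDerivAt FF (hh1 s * sn s + hh s * ((π:ℂ) * Complex.cos ((π:ℂ)*s)) - (π:ℂ)) s := by
    have := ((hh_deriv hs).mul (sn_deriv s)).sub ((hasDerivAt_id s).const_mul (π:ℂ))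
    exact this.congr_deriv (by ring)
  rw [h1.unique h0]

lemma FF2_zero {s : ℂ} (hs : s ∈ B) :
    hh2 s * sn s + 2 * (hh1 s * ((π:ℂ) * Complex.cos ((π:ℂ)*s)))
      - hh s * ((π:ℂ)^2 * Complex.sin ((π:ℂ)*s)) = 0 := by
  have h0 : HasDerivAt (fun s => hh1 s * sn s + hh s * ((π:ℂ) * Complex.cos ((π:ℂ)*s)) - (π:ℂ)) 0 s := by
    refine (hasDerivAt_const s 0).congr_of_eventuallyEq ?_
    filter_upwards [Metric.isOpen_ball.mem_nhds hs] with x hx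
    exact FF1_zero hx
  have h1 : HasDerivAt (fun s => hh1 s * sn s + hh s * ((π:ℂ) * Complex.cos ((π:ℂ)*s)) - (π:ℂ))
      (hh2 s * sn s + 2 * (hh1 s * ((π:ℂ) * Complex.cos ((π:ℂ)*s)))
        - hh s * ((π:ℂ)^2 * Complex.sin ((π:ℂ)*s))) s := by
    have := (((hh1_deriv hs).mul (sn_deriv s)).add
      (((hh_deriv hs).mul (cs_deriv s)))).sub (hasDerivAt_const s (π:ℂ))
    exact this.congr_deriv (by ring)
  rw [h1.unique h0]

lemma FF3_zero :
    hh3 0 * sn 0 + 3 * (hh2 0 * ((π:ℂ) * Complex.cos 0))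
      - 3 * (hh1 0 * ((π:ℂ)^2 * Complex.sin 0)) - hh 0 * ((π:ℂ)^3 * Complex.cos 0) = 0 := by
  have hs : (0:ℂ) ∈ B := by simp [B]
  have h0 : HasDerivAt (fun s => hh2 s * sn s + 2 * (hh1 s * ((π:ℂ) * Complex.cos ((π:ℂ)*s)))
      - hh s * ((π:ℂ)^2 * Complex.sin ((π:ℂ)*s))) 0 0 := by
    refine (hasDerivAt_const 0 0).congr_of_eventuallyEq ?_
    filter_upwards [Metric.isOpen_ball.mem_nhds hs] with x hx
    exact FF2_zero hx
  have hsinD : HasDerivAt (fun s => (π:ℂ)^2 * Complex.sin ((π:ℂ)*s))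
      ((π:ℂ)^3 * Complex.cos ((π:ℂ)*0)) 0 := by
    have := (sn_deriv 0).const_mul ((π:ℂ)^2)
    exact this.congr_deriv (by ring)
  have h1 : HasDerivAt (fun s => hh2 s * sn s + 2 * (hh1 s * ((π:ℂ) * Complex.cos ((π:ℂ)*s)))
      - hh s * ((π:ℂ)^2 * Complex.sin ((π:ℂ)*s)))
      (hh3 0 * sn 0 + 3 * (hh2 0 * ((π:ℂ) * Complex.cos ((π:ℂ)*0)))
        - 3 * (hh1 0 * ((π:ℂ)^2 * Complex.sin ((π:ℂ)*0))) - hh 0 * ((π:ℂ)^3 * Complex.cos ((π:ℂ)*0))) 0 := by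
    have := (((hh2_deriv hs).mul (sn_deriv 0)).add
        ((((hh1_deriv hs).mul (cs_deriv 0))).const_mul 2)).sub
        ((hh_deriv hs).mul hsinD)
    exact this.congr_deriv (by ring)
  have := h1.unique h0
  simpa [mul_zero] using this

lemma Gamma2_one : Γ₂ 1 = (Real.eulerMascheroniConstant:ℂ)^2 + (π:ℂ)^2/6 := by
  have h3 := FF3_zero
  have hΓ1 : Γc 1 = 1 := Complex.Gamma_one
  have hd : Γ₁ 1 = -(Real.eulerMascheroniConstant:ℂ) := Complex.hasDerivAt_Gamma_one.deriv
  simp only [hh, hh1, hh2, sn, mul_zero, Complex.sin_zero, Complex.cos_zero, add_zero, sub_zero,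
    mul_one, mul_zero, zero_mul, add_zero] at h3
  rw [hΓ1, hd] at h3
  have hπ : (6:ℂ) * (π:ℂ) ≠ 0 := by
    simp [Complex.ofReal_ne_zero.mpr Real.pi_ne_zero]
  have key : (6:ℂ) * (π:ℂ) * (deriv (deriv Γc) 1)
      = 6 * (π:ℂ) * ((Real.eulerMascheroniConstant:ℂ)^2 + (π:ℂ)^2/6) := by
    linear_combination h3
  exact mul_left_cancel₀ hπ key






lemma rec_zero {s : ℂ} (hs : s ∈ {z : ℂ | 0 < z.re ∧ z.re < 2}) :
    Γc (s+1) - s * Γc s = 0 := by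
  rw [Complex.Gamma_add_one s (fun h => by rw [h] at hs; simp at hs)]
  ring

lemma rec_one {s : ℂ} (hs : s ∈ {z : ℂ | 0 < z.re ∧ z.re < 2}) :
    Γ₁ (s+1) - Γc s - s * Γ₁ s = 0 := by
  obtain ⟨a1, a2⟩ := hs
  have hp : HasDerivAt (fun s : ℂ => Γc (s+1)) (Γ₁ (s+1)) s := by
    simpa [Function.comp_def] using (hd1' (z := s+1) (by simp; linarith) (by simp; linarith)).comp s
      ((hasDerivAt_id s).add_const 1)
  have h1 : HasDerivAt (fun s : ℂ => Γc (s+1) - s * Γc s)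
      (Γ₁ (s+1) - (Γc s + s * Γ₁ s)) s := by
    have := hp.sub ((hasDerivAt_id s).mul (hd1' a1 (by linarith)))
    exact this.congr_deriv (by simp)
  have h0 : HasDerivAt (fun s : ℂ => Γc (s+1) - s * Γc s) 0 s := by
    refine (hasDerivAt_const s 0).congr_of_eventuallyEq ?_
    filter_upwards [(isOpen_strip 0 2).mem_nhds ⟨a1, a2⟩] with x hx
    exact rec_zero hx
  have := h1.unique h0
  linear_combination this

lemma rec_two {s : ℂ} (hs : s ∈ {z : ℂ | 1/2 < z.re ∧ z.re < 2}) :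
    Γ₂ (s+1) - 2 * Γ₁ s - s * Γ₂ s = 0 := by
  obtain ⟨a1, a2⟩ := hs
  have hp : HasDerivAt (fun s : ℂ => Γ₁ (s+1)) (Γ₂ (s+1)) s := by
    simpa [Function.comp_def] using (hd2' (z := s+1) (by simp; linarith) (by simp; linarith)).comp s
      ((hasDerivAt_id s).add_const 1)
  have h1 : HasDerivAt (fun s : ℂ => Γ₁ (s+1) - Γc s - s * Γ₁ s)
      (Γ₂ (s+1) - Γ₁ s - (Γ₁ s + s * Γ₂ s)) s := by
    have := (hp.sub (hd1' (by linarith) (by linarith))).sub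
      ((hasDerivAt_id s).mul (hd2' a1 (by linarith)))
    exact this.congr_deriv (by simp)
  have h0 : HasDerivAt (fun s : ℂ => Γ₁ (s+1) - Γc s - s * Γ₁ s) 0 s := by
    refine (hasDerivAt_const s 0).congr_of_eventuallyEq ?_
    filter_upwards [(isOpen_strip (1/2) 2).mem_nhds ⟨a1, a2⟩] with x hx
    exact rec_one ⟨by linarith [hx.1], hx.2⟩
  have := h1.unique h0
  linear_combination this

lemma Gamma1_two : Γ₁ 2 = 1 - (Real.eulerMascheroniConstant : ℂ) := by
  have := rec_one (s := 1) (by norm_num)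
  rw [Complex.Gamma_one, Complex.hasDerivAt_Gamma_one.deriv] at this
  norm_num at this
  linear_combination this

lemma Gamma2_two (hG2 : Γ₂ 1 = (Real.eulerMascheroniConstant:ℂ)^2 + (π:ℂ)^2/6) :
    Γ₂ 2 = (Real.eulerMascheroniConstant:ℂ)^2 - 2*(Real.eulerMascheroniConstant:ℂ) + (π:ℂ)^2/6 := by
  have := rec_two (s := 1) (by norm_num)
  rw [Complex.hasDerivAt_Gamma_one.deriv, hG2] at this
  norm_num at this
  linear_combination this


lemma mellinConv_fE {s : ℂ} (h1 : 0 < s.re) (h2 : s.re < 3) : MellinConvergent fE s :=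
  mellinConvergent_of_isBigO_rpow fE_loc fE_top h2 fE_bot (by simpa using h1)
lemma mellinConv_fE1 {s : ℂ} (h1 : 0 < s.re) (h2 : s.re < 3) : MellinConvergent fE1 s :=
  (mellin1 h1 h2).1
lemma mellinConv_fE2 {s : ℂ} (h1 : 1/2 < s.re) (h2 : s.re < 3) : MellinConvergent fE2 s :=
  (mellin2 h1 h2).1






-- pointwise identifications
lemma fE_eq (t : ℝ) : (t:ℂ) ^ ((1:ℂ)-1) • fE t = ((Real.exp (-t) : ℝ) : ℂ) := by
  norm_num
lemma fE1_eq (t : ℝ) : (t:ℂ) ^ ((1:ℂ)-1) • fE1 t = ((Real.log t * Real.exp (-t) : ℝ) : ℂ) := by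
  norm_num [Complex.real_smul]
lemma fE2_eq (t : ℝ) :
    (t:ℂ) ^ ((1:ℂ)-1) • fE2 t = ((Real.log t * (Real.log t * Real.exp (-t)) : ℝ) : ℂ) := by
  norm_num [Complex.real_smul]
lemma fE_eq2 (t : ℝ) : (t:ℂ) ^ ((2:ℂ)-1) • fE t = ((t * Real.exp (-t) : ℝ) : ℂ) := by
  norm_num [Complex.real_smul]
lemma fE1_eq2 (t : ℝ) :
    (t:ℂ) ^ ((2:ℂ)-1) • fE1 t = ((t * (Real.log t * Real.exp (-t)) : ℝ) : ℂ) := by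
  norm_num [Complex.real_smul]
lemma fE2_eq2 (t : ℝ) :
    (t:ℂ) ^ ((2:ℂ)-1) • fE2 t = ((t * (Real.log t * (Real.log t * Real.exp (-t))) : ℝ) : ℂ) := by
  norm_num [Complex.real_smul]

-- integrability
lemma int_g0 : IntegrableOn (fun t => Real.exp (-t)) (Ioi (0:ℝ)) := by
  have h := (mellinConv_fE (s := 1) (by norm_num) (by norm_num)).congr_fun
    (fun t _ => fE_eq t) measurableSet_Ioi
  simpa [IntegrableOn, ← Complex.ofReal_neg, ← Complex.ofReal_exp] using h.re

lemma int_g1 : IntegrableOn (fun t => Real.log t * Real.exp (-t)) (Ioi (0:ℝ)) := by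
  have h := (mellinConv_fE1 (s := 1) (by norm_num) (by norm_num)).congr_fun
    (fun t _ => fE1_eq t) measurableSet_Ioi
  simpa [IntegrableOn, ← Complex.ofReal_neg, ← Complex.ofReal_exp] using h.re

lemma int_g2 : IntegrableOn (fun t => Real.log t * (Real.log t * Real.exp (-t))) (Ioi (0:ℝ)) := by
  have h := (mellinConv_fE2 (s := 1) (by norm_num) (by norm_num)).congr_fun
    (fun t _ => fE2_eq t) measurableSet_Ioi
  simpa [IntegrableOn, ← Complex.ofReal_neg, ← Complex.ofReal_exp] using h.re

lemma int_G0 : IntegrableOn (fun t => t * Real.exp (-t)) (Ioi (0:ℝ)) := by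
  have h := (mellinConv_fE (s := 2) (by norm_num) (by norm_num)).congr_fun
    (fun t _ => fE_eq2 t) measurableSet_Ioi
  simpa [IntegrableOn, ← Complex.ofReal_neg, ← Complex.ofReal_exp] using h.re

lemma int_G1 : IntegrableOn (fun t => t * (Real.log t * Real.exp (-t))) (Ioi (0:ℝ)) := by
  have h := (mellinConv_fE1 (s := 2) (by norm_num) (by norm_num)).congr_fun
    (fun t _ => fE1_eq2 t) measurableSet_Ioi
  simpa [IntegrableOn, ← Complex.ofReal_neg, ← Complex.ofReal_exp] using h.re

lemma int_G2 : IntegrableOn (fun t => t * (Real.log t * (Real.log t * Real.exp (-t)))) (Ioi (0:ℝ)) := by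
  have h := (mellinConv_fE2 (s := 2) (by norm_num) (by norm_num)).congr_fun
    (fun t _ => fE2_eq2 t) measurableSet_Ioi
  simpa [IntegrableOn, ← Complex.ofReal_neg, ← Complex.ofReal_exp] using h.re

-- mellin values as real integrals
lemma mellin_fE_one : mellin fE 1 = ((∫ t in Ioi (0:ℝ), Real.exp (-t) : ℝ) : ℂ) := by
  rw [mellin]
  exact (setIntegral_congr_fun measurableSet_Ioi (fun t _ => fE_eq t)).trans integral_ofReal

lemma mellin_fE1_one :
    mellin fE1 1 = ((∫ t in Ioi (0:ℝ), Real.log t * Real.exp (-t) : ℝ) : ℂ) := by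
  rw [mellin]
  exact (setIntegral_congr_fun measurableSet_Ioi (fun t _ => fE1_eq t)).trans integral_ofReal

lemma mellin_fE2_one :
    mellin fE2 1 = ((∫ t in Ioi (0:ℝ), Real.log t * (Real.log t * Real.exp (-t)) : ℝ) : ℂ) := by
  rw [mellin]
  exact (setIntegral_congr_fun measurableSet_Ioi (fun t _ => fE2_eq t)).trans integral_ofReal

lemma mellin_fE_two : mellin fE 2 = ((∫ t in Ioi (0:ℝ), t * Real.exp (-t) : ℝ) : ℂ) := by
  rw [mellin]
  exact (setIntegral_congr_fun measurableSet_Ioi (fun t _ => fE_eq2 t)).trans integral_ofReal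

lemma mellin_fE1_two :
    mellin fE1 2 = ((∫ t in Ioi (0:ℝ), t * (Real.log t * Real.exp (-t)) : ℝ) : ℂ) := by
  rw [mellin]
  exact (setIntegral_congr_fun measurableSet_Ioi (fun t _ => fE1_eq2 t)).trans integral_ofReal

lemma mellin_fE2_two :
    mellin fE2 2 = ((∫ t in Ioi (0:ℝ), t * (Real.log t * (Real.log t * Real.exp (-t))) : ℝ) : ℂ) := by
  rw [mellin]
  exact (setIntegral_congr_fun measurableSet_Ioi (fun t _ => fE2_eq2 t)).trans integral_ofReal


lemma Gamma_two' : Γc 2 = 1 := by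
  rw [show (2:ℂ) = 1+1 by norm_num, Complex.Gamma_add_one 1 one_ne_zero, Complex.Gamma_one]
  ring

lemma re_two : (2:ℂ).re = 2 := by norm_num

lemma val_g0 : ∫ t in Ioi (0:ℝ), Real.exp (-t) = 1 := by
  have h := mellin_fE_one.symm.trans ((mellin_fE_eq (s := 1) (by norm_num)).trans Complex.Gamma_one)
  exact_mod_cast h

lemma val_g1 : ∫ t in Ioi (0:ℝ), Real.log t * Real.exp (-t) = -Real.eulerMascheroniConstant := by
  have h2 : mellin fE1 1 = -(Real.eulerMascheroniConstant:ℂ) := by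
    rw [← deriv_Gamma_eq (by norm_num) (by norm_num), Complex.hasDerivAt_Gamma_one.deriv]
  have h := mellin_fE1_one.symm.trans h2
  exact_mod_cast h

lemma val_g2 : ∫ t in Ioi (0:ℝ), Real.log t * (Real.log t * Real.exp (-t))
    = Real.eulerMascheroniConstant^2 + π^2/6 := by
  have h2 : mellin fE2 1 = (Real.eulerMascheroniConstant:ℂ)^2 + (π:ℂ)^2/6 := by
    rw [← deriv2_Gamma_eq (by norm_num) (by norm_num), Gamma2_one]
  have h := mellin_fE2_one.symm.trans h2
  have h' : ((∫ t in Ioi (0:ℝ), Real.log t * (Real.log t * Real.exp (-t)) : ℝ) : ℂ)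
      = ((Real.eulerMascheroniConstant^2 + π^2/6 : ℝ) : ℂ) := by
    rw [h]; push_cast; ring
  exact_mod_cast h'

lemma val_G0 : ∫ t in Ioi (0:ℝ), t * Real.exp (-t) = 1 := by
  have h := mellin_fE_two.symm.trans ((mellin_fE_eq (s := 2) (by rw [re_two]; norm_num)).trans Gamma_two')
  exact_mod_cast h

lemma val_G1 : ∫ t in Ioi (0:ℝ), t * (Real.log t * Real.exp (-t))
    = 1 - Real.eulerMascheroniConstant := by
  have h2 : mellin fE1 2 = 1 - (Real.eulerMascheroniConstant:ℂ) := by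
    rw [← deriv_Gamma_eq (by rw [re_two]; norm_num) (by rw [re_two]; norm_num), Gamma1_two]
  have h := mellin_fE1_two.symm.trans h2
  have h' : ((∫ t in Ioi (0:ℝ), t * (Real.log t * Real.exp (-t)) : ℝ) : ℂ)
      = ((1 - Real.eulerMascheroniConstant : ℝ) : ℂ) := by rw [h]; push_cast; ring
  exact_mod_cast h'

lemma val_G2 : ∫ t in Ioi (0:ℝ), t * (Real.log t * (Real.log t * Real.exp (-t)))
    = Real.eulerMascheroniConstant^2 - 2*Real.eulerMascheroniConstant + π^2/6 := by
  have h2 : mellin fE2 2 = (Real.eulerMascheroniConstant:ℂ)^2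
      - 2*(Real.eulerMascheroniConstant:ℂ) + (π:ℂ)^2/6 := by
    rw [← deriv2_Gamma_eq (by rw [re_two]; norm_num) (by rw [re_two]; norm_num),
      Gamma2_two Gamma2_one]
  have h := mellin_fE2_two.symm.trans h2
  have h' : ((∫ t in Ioi (0:ℝ), t * (Real.log t * (Real.log t * Real.exp (-t))) : ℝ) : ℂ)
      = ((Real.eulerMascheroniConstant^2 - 2*Real.eulerMascheroniConstant + π^2/6 : ℝ) : ℂ) := by
    rw [h]; push_cast; ring
  exact_mod_cast h'

end

/-- For `φ ∈ [0,1]`, `∫_0^∞ (log(z) - φ + γ)² (φ(z-1) + 1) e^{-z} dz = π²/6 - φ²`,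
where `γ` is the Euler–Mascheroni constant. -/
theorem integral_log_estimator_variance (φ : ℝ) (hφ : φ ∈ Set.Icc (0 : ℝ) 1) :
    ∫ z in Set.Ioi (0 : ℝ),
        (Real.log z - φ + Real.eulerMascheroniConstant) ^ 2 * (φ * (z - 1) + 1)
          * Real.exp (-z)
      = Real.pi ^ 2 / 6 - φ ^ 2 := by
  set γ := Real.eulerMascheroniConstant with hγ
  have I1 := int_g0.const_mul ((γ-φ)^2*(1-φ))
  have I2 := int_g1.const_mul (2*(γ-φ)*(1-φ))
  have I3 := int_g2.const_mul (1-φ)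
  have I4 := int_G0.const_mul ((γ-φ)^2*φ)
  have I5 := int_G1.const_mul (2*(γ-φ)*φ)
  have I6 := int_G2.const_mul φ
  calc ∫ z in Set.Ioi (0:ℝ), (Real.log z - φ + γ)^2 * (φ*(z-1)+1) * Real.exp (-z)
      = ∫ z in Set.Ioi (0:ℝ),
          (((γ-φ)^2*(1-φ)) * Real.exp (-z)
            + (2*(γ-φ)*(1-φ)) * (Real.log z * Real.exp (-z))
            + (1-φ) * (Real.log z * (Real.log z * Real.exp (-z)))
            + ((γ-φ)^2*φ) * (z * Real.exp (-z))
            + (2*(γ-φ)*φ) * (z * (Real.log z * Real.exp (-z)))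
            + φ * (z * (Real.log z * (Real.log z * Real.exp (-z))))) := by
        refine setIntegral_congr_fun measurableSet_Ioi (fun z _ => ?_)
        ring
    _ = Real.pi^2/6 - φ^2 := by
        have A2 : Integrable (fun z : ℝ => ((γ-φ)^2*(1-φ)) * Real.exp (-z)
            + (2*(γ-φ)*(1-φ)) * (Real.log z * Real.exp (-z))) (volume.restrict (Ioi 0)) :=
          I1.add I2
        have A3 : Integrable (fun z : ℝ => ((γ-φ)^2*(1-φ)) * Real.exp (-z)
            + (2*(γ-φ)*(1-φ)) * (Real.log z * Real.exp (-z))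
            + (1-φ) * (Real.log z * (Real.log z * Real.exp (-z)))) (volume.restrict (Ioi 0)) :=
          A2.add I3
        have A4 : Integrable (fun z : ℝ => ((γ-φ)^2*(1-φ)) * Real.exp (-z)
            + (2*(γ-φ)*(1-φ)) * (Real.log z * Real.exp (-z))
            + (1-φ) * (Real.log z * (Real.log z * Real.exp (-z)))
            + ((γ-φ)^2*φ) * (z * Real.exp (-z))) (volume.restrict (Ioi 0)) :=
          A3.add I4
        have A5 : Integrable (fun z : ℝ => ((γ-φ)^2*(1-φ)) * Real.exp (-z)
            + (2*(γ-φ)*(1-φ)) * (Real.log z * Real.exp (-z))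
            + (1-φ) * (Real.log z * (Real.log z * Real.exp (-z)))
            + ((γ-φ)^2*φ) * (z * Real.exp (-z))
            + (2*(γ-φ)*φ) * (z * (Real.log z * Real.exp (-z)))) (volume.restrict (Ioi 0)) :=
          A4.add I5
        rw [integral_add A5 I6,
          integral_add A4 I5,
          integral_add A3 I4,
          integral_add A2 I3,
          integral_add I1 I2,
          integral_const_mul, integral_const_mul, integral_const_mul, integral_const_mul,
          integral_const_mul, integral_const_mul,
          val_g0, val_g1, val_g2, val_G0, val_G1, val_G2]
        ring
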